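/- Let D be an oriented knot diagram with n ≥ 1 crossings, modeled by a Gauss code g. Then D is a one-bridge diagram if and only if X_D(t) = 1 + t + t² + ⋯ + t^(n−1). -/
import Mathlib


open Polynomial Finset

/-- An oriented knot diagram with `n` crossings, modeled by its oriented Gauss code. -/
structure GaussCode (n : ℕ) where
  g : ZMod (2 * n) → Fin n × Bool
  o : Fin n → ZMod (2 * n)
  u : Fin n → ZMod (2 * n)
  over_iff : ∀ (c : Fin n) (e : ZMod (2 * n)), g e = (c, true) ↔ e = o c
  under_iff : ∀ (c : Fin n) (e : ZMod (2 * n)), g e = (c, false) ↔ e = u c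

namespace GaussCode

variable {n : ℕ}

/-- The warping degree of the base position `e`: the number of crossings whose
under-passage occurs strictly before its over-passage when traversing the diagram
starting at `e`. -/
def d (D : GaussCode n) (e : ZMod (2 * n)) : ℕ :=
  (Finset.univ.filter fun c : Fin n => (D.u c - e).val < (D.o c - e).val).card

/-- The warping crossing polynomial. -/
noncomputable def Xpoly (D : GaussCode n) : Polynomial ℤ :=
  ∑ c : Fin n, Polynomial.X ^ D.d (D.o c)

/-- The warping polynomial. -/
noncomputable def Wpoly (D : GaussCode n) : Polynomial ℤ :=
  ∑ k ∈ Finset.range (2 * n), Polynomial.X ^ D.d (k : ZMod (2 * n))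

/-- The warping degree of the diagram: minimum over all base positions. -/
noncomputable def wdeg (D : GaussCode n) : ℕ :=
  sInf (Set.range fun e : ZMod (2 * n) => D.d e)

/-- The diagram is alternating. -/
def Alternating (D : GaussCode n) : Prop :=
  ∀ e : ZMod (2 * n), (D.g e).2 ≠ (D.g (e + 1)).2

end GaussCode


namespace GaussCode
variable {n : ℕ}

lemma val_sub_one {m : ℕ} [NeZero m] (y : ZMod m) (hy : y ≠ 0) : (y - 1).val = y.val - 1 := by
  have h1 : 1 ≤ y.val := Nat.one_le_iff_ne_zero.mpr (fun h => hy (by rwa [← ZMod.val_eq_zero]))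
  have hlt := y.val_lt
  have : y - 1 = ((y.val - 1 : ℕ) : ZMod m) := by
    push_cast [Nat.cast_sub h1]
    simp [ZMod.natCast_val, ZMod.cast_id]
  rw [this, ZMod.val_cast_of_lt (by omega)]

lemma val_neg_one' {m : ℕ} [NeZero m] : ((-1 : ZMod m)).val = m - 1 := by
  have hm : 1 ≤ m := Nat.one_le_iff_ne_zero.mpr (NeZero.ne m)
  have : (-1 : ZMod m) = ((m - 1 : ℕ) : ZMod m) := by
    push_cast [Nat.cast_sub hm]
    simp
  rw [this, ZMod.val_cast_of_lt (by omega)]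

variable (D : GaussCode n)

lemma g_o (c : Fin n) : D.g (D.o c) = (c, true) := (D.over_iff c (D.o c)).mpr rfl
lemma g_u (c : Fin n) : D.g (D.u c) = (c, false) := (D.under_iff c (D.u c)).mpr rfl

lemma g_eq (e : ZMod (2*n)) : D.g e = ((D.g e).1, (D.g e).2) := rfl


/-- if `e` is not the over position of `c` then `o c ≠ e` -/
lemma o_eq_iff (c : Fin n) (e : ZMod (2*n)) : D.o c = e ↔ D.g e = (c, true) := by
  rw [D.over_iff c e]; exact comm

lemma u_eq_iff (c : Fin n) (e : ZMod (2*n)) : D.u c = e ↔ D.g e = (c, false) := by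
  rw [D.under_iff c e]; exact comm




/-- shifting the base point: membership criterion away from the base point. -/
lemma crit_shift [NeZero (2*n)] {e x y : ZMod (2*n)} (hx : x ≠ e) (hy : y ≠ e) :
    ((x - (e+1)).val < (y - (e+1)).val ↔ (x - e).val < (y - e).val) := by
  have hx' : x - e ≠ 0 := sub_ne_zero.mpr hx
  have hy' : y - e ≠ 0 := sub_ne_zero.mpr hy
  have ex : x - (e+1) = (x - e) - 1 := by ring
  have ey : y - (e+1) = (y - e) - 1 := by ring
  rw [ex, ey, val_sub_one _ hx', val_sub_one _ hy']
  have h1 : 1 ≤ (x - e).val := Nat.one_le_iff_ne_zero.mpr (fun h => hx' (by rwa [← ZMod.val_eq_zero]))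
  have h2 : 1 ≤ (y - e).val := Nat.one_le_iff_ne_zero.mpr (fun h => hy' (by rwa [← ZMod.val_eq_zero]))
  omega

lemma d_step_true [NeZero (2*n)] {e : ZMod (2*n)} (h : (D.g e).2 = true) :
    D.d (e + 1) = D.d e + 1 := by
  set c0 := (D.g e).1 with hc0
  have hg : D.g e = (c0, true) := by rw [hc0, ← h]
  have ho : D.o c0 = e := ((D.over_iff c0 e).mp hg).symm
  have hu : D.u c0 ≠ e := by
    intro hue
    have : D.g e = (c0, false) := (D.under_iff c0 e).mpr hue.symm
    rw [this] at hg; simp at hg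
  have hne : ∀ c : Fin n, c ≠ c0 → D.o c ≠ e ∧ D.u c ≠ e := by
    intro c hc
    constructor
    · intro hoe
      have : D.g e = (c, true) := (D.over_iff c e).mpr hoe.symm
      rw [hg] at this; exact hc (by simpa using this.symm)
    · intro hue
      have : D.g e = (c, false) := (D.under_iff c e).mpr hue.symm
      rw [hg] at this; simp at this
  have key : (Finset.univ.filter fun c : Fin n => (D.u c - (e+1)).val < (D.o c - (e+1)).val)
      = insert c0 (Finset.univ.filter fun c : Fin n => (D.u c - e).val < (D.o c - e).val) := by
    ext c
    simp only [Finset.mem_filter, Finset.mem_univ, true_and, Finset.mem_insert]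
    by_cases hc : c = c0
    · subst hc
      simp only [true_or, iff_true]
      have h3 : D.o c0 - (e+1) = -1 := by rw [ho]; ring
      rw [h3, val_neg_one']
      have h1 : (D.u c0 - (e+1)).val < 2*n := ZMod.val_lt _
      have h2 : D.u c0 - (e+1) ≠ -1 := by
        intro hh
        apply hu
        linear_combination hh
      have : (D.u c0 - (e+1)).val ≠ 2*n - 1 := by
        intro hh
        apply h2
        apply ZMod.val_injective
        rw [hh, val_neg_one']
      omega
    · obtain ⟨h1, h2⟩ := hne c hc
      rw [crit_shift h2 h1]
      simp [hc]
  have hnotmem : c0 ∉ (Finset.univ.filter fun c : Fin n => (D.u c - e).val < (D.o c - e).val) := by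
    simp [ho]
  rw [d, d, key, Finset.card_insert_of_notMem hnotmem]

lemma d_step_false [NeZero (2*n)] {e : ZMod (2*n)} (h : (D.g e).2 = false) :
    D.d e = D.d (e + 1) + 1 := by
  set c0 := (D.g e).1 with hc0
  have hg : D.g e = (c0, false) := by rw [hc0, ← h]
  have hu : D.u c0 = e := ((D.under_iff c0 e).mp hg).symm
  have ho : D.o c0 ≠ e := by
    intro hoe
    have : D.g e = (c0, true) := (D.over_iff c0 e).mpr hoe.symm
    rw [this] at hg; simp at hg
  have hne : ∀ c : Fin n, c ≠ c0 → D.o c ≠ e ∧ D.u c ≠ e := by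
    intro c hc
    constructor
    · intro hoe
      have : D.g e = (c, true) := (D.over_iff c e).mpr hoe.symm
      rw [hg] at this; simp at this
    · intro hue
      have : D.g e = (c, false) := (D.under_iff c e).mpr hue.symm
      rw [hg] at this; exact hc (by simpa using this.symm)
  have key : (Finset.univ.filter fun c : Fin n => (D.u c - e).val < (D.o c - e).val)
      = insert c0 (Finset.univ.filter fun c : Fin n => (D.u c - (e+1)).val < (D.o c - (e+1)).val) := by
    ext c
    simp only [Finset.mem_filter, Finset.mem_univ, true_and, Finset.mem_insert]
    by_cases hc : c = c0
    · subst hc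
      simp only [true_or, iff_true]
      have h3 : D.u c0 - e = 0 := by rw [hu]; ring
      rw [h3, ZMod.val_zero]
      exact Nat.pos_of_ne_zero (fun hh => (sub_ne_zero.mpr ho) (by rwa [← ZMod.val_eq_zero]))
    · obtain ⟨h1, h2⟩ := hne c hc
      rw [crit_shift h2 h1]
      simp [hc]
  have hnotmem : c0 ∉ (Finset.univ.filter fun c : Fin n => (D.u c - (e+1)).val < (D.o c - (e+1)).val) := by
    simp only [Finset.mem_filter, Finset.mem_univ, true_and, not_lt]
    have : D.u c0 - (e+1) = -1 := by rw [hu]; ring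
    rw [this, val_neg_one']
    have := ZMod.val_lt (D.o c0 - (e+1))
    omega
  rw [d, d, key, Finset.card_insert_of_notMem hnotmem]


lemma d_walk [NeZero (2*n)] (e : ZMod (2*n)) (k : ℕ) :
    D.d (e + k) + k = D.d e +
      2 * ((Finset.range k).filter (fun i : ℕ => (D.g (e + (i : ZMod (2*n)))).2 = true)).card := by
  induction k with
  | zero => simp
  | succ k ih =>
    have hcast : e + ((k+1 : ℕ) : ZMod (2*n)) = (e + k) + 1 := by push_cast; ring
    rw [hcast, Finset.range_add_one, Finset.filter_insert]
    by_cases hb : (D.g (e + k)).2 = true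
    · rw [D.d_step_true hb]
      rw [if_pos hb, Finset.card_insert_of_notMem (by simp)]
      omega
    · rw [if_neg hb]
      have := D.d_step_false (e := e + k) (by simpa using hb)
      omega

lemma o_injective : Function.Injective D.o := by
  intro c c' h
  have h1 := D.g_o c
  have h2 := D.g_o c'
  rw [h] at h1; rw [h1] at h2; simpa using h2

lemma cast_nat_inj {i j : ℕ} (hi : i < 2*n) (hj : j < 2*n) (h : (i : ZMod (2*n)) = j) : i = j := by
  have : NeZero (2*n) := ⟨by omega⟩
  rw [← ZMod.val_cast_of_lt hi, ← ZMod.val_cast_of_lt hj, h]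

lemma add_self_val [NeZero (2*n)] (e x : ZMod (2*n)) : e + ((x - e).val : ZMod (2*n)) = x := by
  simp [ZMod.natCast_val, ZMod.cast_id]

/-- Forward: base point at the start of the bridge has warping degree 0. -/
lemma d_of_bridge_start (hn : 1 ≤ n) {a : ZMod (2*n)}
    (ha : ∀ e : ZMod (2*n), (D.g e).2 = true ↔ ∃ j ∈ Finset.range n, e = a + (j : ZMod (2*n))) :
    ∀ j < n, D.d (a + (j : ZMod (2*n))) = j := by
  haveI : NeZero (2*n) := ⟨by omega⟩
  have hbase : D.d a = 0 := by
    rw [d, Finset.card_eq_zero, Finset.filter_eq_empty_iff]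
    intro c _
    have htrue : (D.g (D.o c)).2 = true := by rw [D.g_o]
    obtain ⟨j, hj, hoc⟩ := (ha (D.o c)).mp htrue
    rw [Finset.mem_range] at hj
    have hov : (D.o c - a).val = j := by
      rw [hoc]; rw [add_sub_cancel_left, ZMod.val_cast_of_lt (by omega)]
    have huv : n ≤ (D.u c - a).val := by
      by_contra hlt
      push_neg at hlt
      have : (D.g (D.u c)).2 = true := by
        apply (ha (D.u c)).mpr
        exact ⟨(D.u c - a).val, Finset.mem_range.mpr hlt, (add_self_val a (D.u c)).symm⟩
      rw [D.g_u] at this; simp at this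
    omega
  intro j hj
  induction j with
  | zero => simpa using hbase
  | succ j ih =>
    have hjn : j < n := by omega
    have htrue : (D.g (a + (j : ZMod (2*n)))).2 = true :=
      (ha _).mpr ⟨j, Finset.mem_range.mpr hjn, rfl⟩
    have hcast : a + ((j+1 : ℕ) : ZMod (2*n)) = (a + j) + 1 := by push_cast; ring
    rw [hcast, D.d_step_true htrue, ih hjn]


lemma trues_eq_image_o [NeZero (2*n)] :
    (Finset.univ.filter fun p : ZMod (2*n) => (D.g p).2 = true)
      = Finset.univ.image D.o := by
  ext p
  simp only [Finset.mem_filter, Finset.mem_univ, true_and, Finset.mem_image]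
  constructor
  · intro hp
    refine ⟨(D.g p).1, ?_⟩
    exact ((D.over_iff (D.g p).1 p).mp (by rw [← hp])).symm
  · rintro ⟨c, rfl⟩
    rw [D.g_o]

lemma card_trues [NeZero (2*n)] :
    (Finset.univ.filter fun p : ZMod (2*n) => (D.g p).2 = true).card = n := by
  rw [D.trues_eq_image_o, Finset.card_image_of_injective _ D.o_injective, Finset.card_univ,
    Fintype.card_fin]

/-- Backward core: if `c ↦ d (o c)` is injective with values `< n` and some value is `0`,
then the over-passages form the run from `e0`. -/
lemma run_of_d (hn : 1 ≤ n)
    (hlt : ∀ c : Fin n, D.d (D.o c) < n)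
    (hinj : Function.Injective fun c : Fin n => D.d (D.o c))
    {c0 : Fin n} (h0 : D.d (D.o c0) = 0) :
    ∀ j < n, (D.g (D.o c0 + (j : ZMod (2*n)))).2 = true ∧ D.d (D.o c0 + (j : ZMod (2*n))) = j := by
  haveI : NeZero (2*n) := ⟨by omega⟩
  set e0 := D.o c0 with he0
  intro j hj
  induction j using Nat.strong_induction_on with
  | _ j IH =>
  -- first establish d (e0 + j) = j and (for j > 0) the predecessor facts
  have hd : D.d (e0 + (j : ZMod (2*n))) = j := by
    cases j with
    | zero => simpa using h0
    | succ j' =>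
      obtain ⟨ht', hd'⟩ := IH j' (by omega) (by omega)
      have hcast : e0 + ((j'+1 : ℕ) : ZMod (2*n)) = (e0 + j') + 1 := by push_cast; ring
      rw [hcast, D.d_step_true ht', hd']
  refine ⟨?_, hd⟩
  by_contra hfalse
  rw [Bool.not_eq_true] at hfalse
  -- the set of later true positions
  set S : Finset ℕ := (Finset.range (2*n)).filter
    (fun m => j < m ∧ (D.g (e0 + (m : ZMod (2*n)))).2 = true) with hS
  have hSne : S.Nonempty := by
    -- there are n trues but at most j+1 ≤ n positions e0 + i with i ≤ j, and e0+j is false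
    by_contra hemp
    rw [Finset.not_nonempty_iff_eq_empty] at hemp
    -- every true position is e0 + m with m ≤ j
    have hsub : (Finset.univ.filter fun p : ZMod (2*n) => (D.g p).2 = true)
        ⊆ (Finset.range j).image (fun i : ℕ => e0 + (i : ZMod (2*n))) := by
      intro p hp
      rw [Finset.mem_filter] at hp
      set m := (p - e0).val with hm
      have hpm : p = e0 + (m : ZMod (2*n)) := (add_self_val e0 p).symm
      have hmlt : m < 2*n := ZMod.val_lt _
      have hmj : m < j ∨ m = j ∨ (j < m) := by omega
      rcases hmj with h | h | h
      · exact Finset.mem_image.mpr ⟨m, Finset.mem_range.mpr h, hpm.symm⟩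
      · exfalso; rw [hpm, h] at hp; rw [hp.2] at hfalse; simp at hfalse
      · exfalso
        have : m ∈ S := by
          rw [hS, Finset.mem_filter, Finset.mem_range]
          exact ⟨hmlt, h, by rw [← hpm]; exact hp.2⟩
        rw [hemp] at this; simp at this
    have hcard := Finset.card_le_card hsub
    rw [D.card_trues] at hcard
    have : ((Finset.range j).image (fun i : ℕ => e0 + (i : ZMod (2*n)))).card ≤ j :=
      le_trans (Finset.card_image_le) (by simp)
    omega
  set M := S.min' hSne with hM
  have hMS : M ∈ S := S.min'_mem hSne
  rw [hS, Finset.mem_filter, Finset.mem_range] at hMS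
  obtain ⟨hM2n, hjM, hMtrue⟩ := hMS
  -- all positions e0 + i for j ≤ i < M are false
  have hallfalse : ∀ i : ℕ, j ≤ i → i < M → (D.g (e0 + (i : ZMod (2*n)))).2 = false := by
    intro i h1 h2
    rcases Nat.eq_or_lt_of_le h1 with h | h
    · rw [← h]; exact hfalse
    · by_contra hb
      rw [Bool.not_eq_false] at hb
      have : i ∈ S := by
        rw [hS, Finset.mem_filter, Finset.mem_range]
        exact ⟨by omega, h, hb⟩
      have := S.min'_le i this
      omega
  -- walk from e0 + j to e0 + M : all false, so d decreases
  have hwalk := D.d_walk (e0 + (j : ZMod (2*n))) (M - j)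
  have hfilt : ((Finset.range (M - j)).filter
      (fun i : ℕ => (D.g (e0 + (j : ZMod (2*n)) + (i : ZMod (2*n)))).2 = true)) = ∅ := by
    rw [Finset.filter_eq_empty_iff]
    intro i hi
    rw [Finset.mem_range] at hi
    have : e0 + (j : ZMod (2*n)) + (i : ZMod (2*n)) = e0 + ((j + i : ℕ) : ZMod (2*n)) := by
      push_cast; ring
    rw [this, hallfalse (j+i) (by omega) (by omega)]
    simp
  rw [hfilt] at hwalk
  have hcast2 : e0 + (j : ZMod (2*n)) + ((M - j : ℕ) : ZMod (2*n)) = e0 + (M : ZMod (2*n)) := by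
    have : ((M - j : ℕ) : ZMod (2*n)) = (M : ZMod (2*n)) - (j : ZMod (2*n)) := by
      rw [Nat.cast_sub (by omega)]
    rw [this]; ring
  rw [hcast2, hd] at hwalk
  simp only [Finset.card_empty, mul_zero, add_zero] at hwalk
  -- d at e0 + M
  set v := D.d (e0 + (M : ZMod (2*n))) with hv
  have hvj : v + (M - j) = j := hwalk
  have hvlt : v < j := by omega
  -- position e0 + M is an over position
  set c := (D.g (e0 + (M : ZMod (2*n)))).1 with hc
  have hoc : D.o c = e0 + (M : ZMod (2*n)) := by
    have : D.g (e0 + (M : ZMod (2*n))) = (c, true) := by rw [hc, ← hMtrue]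
    exact ((D.over_iff c _).mp this).symm
  -- position e0 + v is an over position with same d value
  obtain ⟨hvt, hvd⟩ := IH v (by omega) (by omega)
  set c' := (D.g (e0 + (v : ZMod (2*n)))).1 with hc'
  have hoc' : D.o c' = e0 + (v : ZMod (2*n)) := by
    have : D.g (e0 + (v : ZMod (2*n))) = (c', true) := by rw [hc', ← hvt]
    exact ((D.over_iff c' _).mp this).symm
  have hcc : c = c' := by
    apply hinj
    show D.d (D.o c) = D.d (D.o c')
    rw [hoc, hoc', ← hv, hvd]
  have : (M : ZMod (2*n)) = (v : ZMod (2*n)) := by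
    have h5 : e0 + (M : ZMod (2*n)) = e0 + (v : ZMod (2*n)) := by
      rw [← hoc, hcc, hoc']
    exact add_left_cancel h5
  have := cast_nat_inj hM2n (by omega) this
  omega


end GaussCode

/-- A knot diagram with `n ≥ 1` crossings is a one-bridge diagram (its over-passages
form a single run `a, a+1, …, a+n−1`) iff `X_D(t) = 1 + t + t² + ⋯ + t^(n−1)`. -/
theorem one_bridge_iff_Xpoly (n : ℕ) (hn : 1 ≤ n) (D : GaussCode n) :
    (∃ a : ZMod (2 * n), ∀ e : ZMod (2 * n),
        (D.g e).2 = true ↔ ∃ j ∈ Finset.range n, e = a + (j : ZMod (2 * n))) ↔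
      D.Xpoly = ∑ i ∈ Finset.range n, Polynomial.X ^ i := by
  haveI : NeZero (2*n) := ⟨by omega⟩
  constructor
  · rintro ⟨a, ha⟩
    rw [GaussCode.Xpoly]
    refine Finset.sum_nbij' (i := fun c => (D.o c - a).val)
      (j := fun k => (D.g (a + (k : ZMod (2*n)))).1) ?_ ?_ ?_ ?_ ?_
    · -- maps into range n
      intro c _
      have htrue : (D.g (D.o c)).2 = true := by rw [D.g_o]
      obtain ⟨j, hj, hoc⟩ := (ha (D.o c)).mp htrue
      rw [Finset.mem_range] at hj
      have : (D.o c - a).val = j := by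
        rw [hoc, add_sub_cancel_left, ZMod.val_cast_of_lt (by omega)]
      show (D.o c - a).val ∈ Finset.range n
      rw [Finset.mem_range, this]; exact hj
    · intro k _; exact Finset.mem_univ _
    · -- left inverse
      intro c _
      have h1 : a + ((D.o c - a).val : ZMod (2*n)) = D.o c := GaussCode.add_self_val a (D.o c)
      show (D.g (a + ((D.o c - a).val : ZMod (2*n)))).1 = c
      rw [h1, D.g_o]
    · -- right inverse
      intro k hk
      rw [Finset.mem_range] at hk
      have htrue : (D.g (a + (k : ZMod (2*n)))).2 = true :=
        (ha _).mpr ⟨k, Finset.mem_range.mpr hk, rfl⟩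
      have hgc : D.g (a + (k : ZMod (2*n))) = ((D.g (a + (k : ZMod (2*n)))).1, true) := by
        rw [← htrue]
      have ho := ((D.over_iff _ _).mp hgc).symm
      show (D.o (D.g (a + (k : ZMod (2*n)))).1 - a).val = k
      rw [ho, add_sub_cancel_left, ZMod.val_cast_of_lt (by omega)]
    · -- values
      intro c _
      have htrue : (D.g (D.o c)).2 = true := by rw [D.g_o]
      obtain ⟨j, hj, hoc⟩ := (ha (D.o c)).mp htrue
      rw [Finset.mem_range] at hj
      have hv : (D.o c - a).val = j := by
        rw [hoc, add_sub_cancel_left, ZMod.val_cast_of_lt (by omega)]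
      have hd : D.d (D.o c) = j := by
        rw [hoc]; exact D.d_of_bridge_start hn ha j hj
      show (Polynomial.X : Polynomial ℤ) ^ D.d (D.o c) = Polynomial.X ^ (D.o c - a).val
      rw [hd, hv]
  · intro hX
    -- coefficient extraction
    have hco : ∀ k : ℕ, ((Finset.univ.filter fun c : Fin n => k = D.d (D.o c)).card : ℤ)
        = if k < n then 1 else 0 := by
      intro k
      have h1 : D.Xpoly.coeff k = (∑ i ∈ Finset.range n, (Polynomial.X : Polynomial ℤ) ^ i).coeff k := by
        rw [hX]
      rw [GaussCode.Xpoly, Polynomial.finset_sum_coeff, Polynomial.finset_sum_coeff] at h1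
      simp only [Polynomial.coeff_X_pow] at h1
      rw [Finset.sum_boole, Finset.sum_ite_eq] at h1
      rw [h1]
      simp [Finset.mem_range]
    have hltn : ∀ c : Fin n, D.d (D.o c) < n := by
      intro c
      by_contra hge
      push_neg at hge
      have h1 := hco (D.d (D.o c))
      rw [if_neg (by omega)] at h1
      have : c ∈ Finset.univ.filter fun c' : Fin n => D.d (D.o c) = D.d (D.o c') := by simp
      have h2 := Finset.card_pos.mpr ⟨c, this⟩
      rw [show (0:ℤ) = ((0:ℕ):ℤ) from rfl] at h1
      have := Nat.cast_injective (R := ℤ) h1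
      omega
    have hinj : Function.Injective fun c : Fin n => D.d (D.o c) := by
      intro c c' hcc
      simp only at hcc
      set k := D.d (D.o c) with hk
      have h1 := hco k
      rw [if_pos (hltn c)] at h1
      have hc : c ∈ Finset.univ.filter fun c'' : Fin n => k = D.d (D.o c'') := by simp [hk]
      have hc' : c' ∈ Finset.univ.filter fun c'' : Fin n => k = D.d (D.o c'') := by
        simp only [Finset.mem_filter, Finset.mem_univ, true_and]
        exact hcc
      have hle : (Finset.univ.filter fun c'' : Fin n => k = D.d (D.o c'')).card ≤ 1 := by
        have : ((Finset.univ.filter fun c'' : Fin n => k = D.d (D.o c'')).card : ℤ) = 1 := h1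
        exact_mod_cast this.le
      exact Finset.card_le_one.mp hle c hc c' hc'
    have hex0 : ∃ c0 : Fin n, D.d (D.o c0) = 0 := by
      have h1 := hco 0
      rw [if_pos (show 0 < n by omega)] at h1
      have h2 : (Finset.univ.filter fun c : Fin n => 0 = D.d (D.o c)).card = 1 := by
        exact_mod_cast h1
      have hpos : 0 < (Finset.univ.filter fun c : Fin n => 0 = D.d (D.o c)).card := by omega
      obtain ⟨c0, hc0⟩ := Finset.card_pos.mp hpos
      rw [Finset.mem_filter] at hc0
      exact ⟨c0, hc0.2.symm⟩
    obtain ⟨c0, h0⟩ := hex0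
    have hrun := D.run_of_d hn hltn hinj h0
    refine ⟨D.o c0, fun e => ?_⟩
    constructor
    · intro he
      -- e is a true position; trues = image of the run
      have hBsub : ((Finset.range n).image fun j : ℕ => D.o c0 + (j : ZMod (2*n)))
          ⊆ Finset.univ.filter fun p : ZMod (2*n) => (D.g p).2 = true := by
        intro p hp
        rw [Finset.mem_image] at hp
        obtain ⟨j, hj, rfl⟩ := hp
        rw [Finset.mem_range] at hj
        rw [Finset.mem_filter]
        exact ⟨Finset.mem_univ _, (hrun j hj).1⟩
      have hBcard : ((Finset.range n).image fun j : ℕ => D.o c0 + (j : ZMod (2*n))).card = n := by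
        rw [Finset.card_image_of_injOn, Finset.card_range]
        intro i hi i' hi' hii
        rw [Finset.coe_range, Set.mem_Iio] at hi hi'
        have : (i : ZMod (2*n)) = (i' : ZMod (2*n)) := add_left_cancel hii
        exact GaussCode.cast_nat_inj (by omega) (by omega) this
      have hEq : ((Finset.range n).image fun j : ℕ => D.o c0 + (j : ZMod (2*n)))
          = Finset.univ.filter fun p : ZMod (2*n) => (D.g p).2 = true :=
        Finset.eq_of_subset_of_card_le hBsub (by rw [hBcard, D.card_trues])
      have : e ∈ ((Finset.range n).image fun j : ℕ => D.o c0 + (j : ZMod (2*n))) := by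
        rw [hEq, Finset.mem_filter]
        exact ⟨Finset.mem_univ _, he⟩
      rw [Finset.mem_image] at this
      obtain ⟨j, hj, hje⟩ := this
      exact ⟨j, hj, hje.symm⟩
    · rintro ⟨j, hj, rfl⟩
      rw [Finset.mem_range] at hj
      exact (hrun j hj).1
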